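/- Let V be a p-adic vertex algebra with vacuum 𝟏 satisfying |𝟏| ≤ 1 and creativity a(-1)𝟏 = a. Then |a| ≤ |Y(a,z)| for all a ∈ V; consequently the state-field correspondence Y is injective. If moreover V is submultiplicative then |a| = |Y(a,z)|. -/
import Mathlib


open Filter

variable {p : ℕ} [Fact p.Prime] {V : Type*} [NormedAddCommGroup V] [NormedSpace ℚ_[p] V]

/-- A `p`-adic field on a `p`-adic Banach space `V`, given by its modes
`A n : V →L[ℚ_[p]] V`: the modes are uniformly bounded, and `A n b → 0` as `n → ∞`
for every `b ∈ V`. -/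
def IsPadicField (A : ℤ → V →L[ℚ_[p]] V) : Prop :=
  (∃ M : ℝ, 0 ≤ M ∧ ∀ (n : ℤ) (b : V), ‖A n b‖ ≤ M * ‖b‖) ∧
    ∀ b : V, Tendsto (fun n : ℤ => A n b) atTop (nhds 0)

/-- A `p`-adic vertex algebra: a `p`-adic Banach space `V` with a continuous linear
state–field correspondence `Y` taking values in `p`-adic fields, a vacuum vector `𝟏`
of norm at most `1`, satisfying creativity and the `p`-adic Jacobi identity (whose
sums now converge `p`-adically rather than truncating). -/
structure PadicVertexAlgebra (p : ℕ) [Fact p.Prime] (V : Type*) [NormedAddCommGroup V]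
    [NormedSpace ℚ_[p] V] [CompleteSpace V] [IsUltrametricDist V] where
  /-- the state–field correspondence, recorded through its modes `Y a n = a(n)` -/
  Y : V →ₗ[ℚ_[p]] (ℤ → V →L[ℚ_[p]] V)
  /-- the vacuum vector `𝟏` -/
  one : V
  /-- each `Y(a,z)` is a `p`-adic field -/
  isField : ∀ a : V, IsPadicField (Y a)
  /-- `Y` is bounded (equivalently, continuous) for the sup-norm on fields -/
  Ybound : ∃ C : ℝ, 0 ≤ C ∧ ∀ (a : V) (n : ℤ), ‖Y a n‖ ≤ C * ‖a‖
  /-- vacuum normalization `|𝟏| ≤ 1` -/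
  norm_one : ‖one‖ ≤ 1
  /-- creativity: `a(-1)𝟏 = a` -/
  create_neg_one : ∀ a : V, Y a (-1) one = a
  /-- creativity: `a(n)𝟏 = 0` for `n ≥ 0` -/
  create_nonneg : ∀ a : V, ∀ n : ℤ, 0 ≤ n → Y a n one = 0
  /-- the `p`-adic Jacobi identity -/
  jacobi : ∀ u v w : V, ∀ r s t : ℤ,
    ∑' i : ℕ, Ring.choose r i • Y (Y u (t + i) v) (r + s - i) w =
    ∑' i : ℕ, ((-1) ^ i * Ring.choose t i : ℤ) •
      (Y u (r + t - i) (Y v (s + i) w)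
        - (((-1 : ℤˣ) ^ t : ℤˣ) : ℤ) • Y v (s + t - i) (Y u (r + i) w))

/-- In a `p`-adic vertex algebra, `|a| ≤ |Y(a,z)| = supₙ ‖a(n)‖`; consequently the
state–field correspondence is injective. If moreover `V` is submultiplicative,
then `|a| = |Y(a,z)|`. -/
theorem padicVertexAlgebra_norm_le_field_norm
    (p : ℕ) [Fact p.Prime] (V : Type*) [NormedAddCommGroup V] [NormedSpace ℚ_[p] V]
    [CompleteSpace V] [IsUltrametricDist V] (A : PadicVertexAlgebra p V) :
    (∀ a : V, ‖a‖ ≤ ⨆ n : ℤ, ‖A.Y a n‖) ∧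
    Function.Injective A.Y ∧
    ((∀ (a : V) (n : ℤ) (b : V), ‖A.Y a n b‖ ≤ ‖a‖ * ‖b‖) →
      ∀ a : V, (⨆ n : ℤ, ‖A.Y a n‖) = ‖a‖) := by
  obtain ⟨C, hC0, hC⟩ := A.Ybound
  have hbdd : ∀ a : V, BddAbove (Set.range fun n : ℤ => ‖A.Y a n‖) := by
    intro a
    exact ⟨C * ‖a‖, by rintro x ⟨n, rfl⟩; exact hC a n⟩
  have hle : ∀ a : V, ‖a‖ ≤ ⨆ n : ℤ, ‖A.Y a n‖ := by
    intro a
    calc ‖a‖ = ‖A.Y a (-1) A.one‖ := by rw [A.create_neg_one]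
      _ ≤ ‖A.Y a (-1)‖ * ‖A.one‖ := (A.Y a (-1)).le_opNorm A.one
      _ ≤ ‖A.Y a (-1)‖ * 1 := by
          exact mul_le_mul_of_nonneg_left A.norm_one (norm_nonneg _)
      _ = ‖A.Y a (-1)‖ := mul_one _
      _ ≤ ⨆ n : ℤ, ‖A.Y a n‖ := le_ciSup (hbdd a) (-1)
  refine ⟨hle, ?_, ?_⟩
  · intro a b hab
    have h : A.Y (a - b) = 0 := by rw [map_sub, hab, sub_self]
    have : a - b = A.Y (a - b) (-1) A.one := (A.create_neg_one _).symm
    rw [h] at this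
    simpa [sub_eq_zero] using this
  · intro hsub a
    refine le_antisymm (ciSup_le fun n => ?_) (hle a)
    exact (A.Y a n).opNorm_le_bound (norm_nonneg a) fun b => hsub a n b
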